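/- Let G be an undirected transitively orientable graph on a finite vertex set V and let S be a locally maximal permutation subgraph of G, i.e., an undirected subgraph of G that is a permutation graph and is not strictly contained in any undirected subgraph of G that is a permutation graph. Then there exists an orientation H of the complement of G such that S = G \ ucl(tcl(H)). -/

import Mathlib

/-- Undirected closure of a digraph: `E ∪ E⁻¹`. -/
def ucl {V : Type*} (E : V → V → Prop) : V → V → Prop := fun a b => E a b ∨ E b a

/-- Complement of a digraph: all pairs of distinct vertices not in `ucl E`. -/
def cmpl {V : Type*} (E : V → V → Prop) : V → V → Prop := fun a b => a ≠ b ∧ ¬ ucl E a b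

/-- A digraph is oriented iff `E ∩ E⁻¹ = ∅`. -/
def Oriented {V : Type*} (E : V → V → Prop) : Prop := ∀ a b, E a b → ¬ E b a

/-- `O` is an orientation of `E`: a maximal oriented subset of `E`. -/
def IsOrientation {V : Type*} (O E : V → V → Prop) : Prop :=
  (∀ a b, O a b → E a b) ∧ Oriented O ∧
    ∀ O' : V → V → Prop, (∀ a b, O' a b → E a b) → Oriented O' →
      (∀ a b, O a b → O' a b) → ∀ a b, O' a b → O a b

/-- Transitivity of a digraph: `(a,b) ∈ E`, `(b,c) ∈ E` and `a ≠ c` imply `(a,c) ∈ E`. -/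
def TransD {V : Type*} (E : V → V → Prop) : Prop :=
  ∀ a b c, E a b → E b c → a ≠ c → E a c

/-- Transitive closure of a digraph. -/
def tcl {V : Type*} (E : V → V → Prop) : V → V → Prop := Relation.TransGen E

/-- A digraph is acyclic iff its transitive closure is irreflexive. -/
def Acyclic {V : Type*} (E : V → V → Prop) : Prop := Irreflexive (tcl E)

/-- A transitive orientation of `E` is an orientation of `E` that is transitive. -/
def IsTransOrientation {V : Type*} (O E : V → V → Prop) : Prop :=
  IsOrientation O E ∧ TransD O

/-- `E` is transitively orientable iff it has a transitive orientation. -/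
def TransOrientable {V : Type*} (E : V → V → Prop) : Prop := ∃ O, IsTransOrientation O E

/-- `L` is a strict linear order on the vertex set. -/
def IsStrictLinear {V : Type*} (L : V → V → Prop) : Prop :=
  Irreflexive L ∧ Transitive L ∧ ∀ a b : V, a ≠ b → L a b ∨ L b a

/-- `E` is 2-dimensional: the intersection of two strict linear orders. -/
def TwoDim {V : Type*} (E : V → V → Prop) : Prop :=
  ∃ L₁ L₂ : V → V → Prop, IsStrictLinear L₁ ∧ IsStrictLinear L₂ ∧
    ∀ a b, E a b ↔ L₁ a b ∧ L₂ a b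

/-- Direct forcing `Γ` between edges of an undirected graph `E`:
`(a,b) Γ (c,d)` iff both are edges of `E` and either `a = c` with `b, d` non-adjacent,
or `b = d` with `a, c` non-adjacent. -/
def Forces {V : Type*} (E : V → V → Prop) (e f : V × V) : Prop :=
  E e.1 e.2 ∧ E f.1 f.2 ∧
    ((e.1 = f.1 ∧ e.2 ≠ f.2 ∧ ¬ E e.2 f.2) ∨ (e.2 = f.2 ∧ e.1 ≠ f.1 ∧ ¬ E e.1 f.1))

/-- `S` is a 2-dimensional subgraph of `G`: a subgraph that is a 2-dimensional
acyclic transitive digraph. -/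
def TwoDimSubgraph {V : Type*} (G S : V → V → Prop) : Prop :=
  (∀ a b, S a b → G a b) ∧ Irreflexive S ∧ TransD S ∧ Acyclic S ∧ TwoDim S

/-- A permutation graph: an undirected graph such that both it and its complement
are transitively orientable. -/
def PermGraph {V : Type*} (E : V → V → Prop) : Prop :=
  Irreflexive E ∧ (∀ a b, E a b → E b a) ∧ TransOrientable E ∧ TransOrientable (cmpl E)

/-- `S` is a permutation subgraph of `G`: an undirected subgraph of `G` that is a
permutation graph. -/
def PermSubgraph {V : Type*} (G S : V → V → Prop) : Prop :=
  (∀ a b, S a b → G a b) ∧ PermGraph S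


section AuxLemmas

variable {V : Type*}

/-- In an irreflexive symmetric graph, an orientation selects at least one
direction of every edge. -/
lemma orientation_covers {E O : V → V → Prop} (hirrE : ∀ a, ¬ E a a)
    (hO : IsOrientation O E) : ∀ a b, E a b → O a b ∨ O b a := by
  intro a b hab
  by_contra hcon
  push_neg at hcon
  obtain ⟨hOE, hOr, hmaxO⟩ := hO
  have hne : a ≠ b := fun h => hirrE a (h ▸ hab)
  have hOab : O a b := by
    refine hmaxO (fun x y => O x y ∨ (x = a ∧ y = b)) ?_ ?_
      (fun x y h => Or.inl h) a b (Or.inr ⟨rfl, rfl⟩)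
    · rintro x y (h1 | ⟨rfl, rfl⟩)
      · exact hOE x y h1
      · exact hab
    · rintro x y (h1 | ⟨rfl, rfl⟩) h2
      · rcases h2 with h2 | ⟨rfl, rfl⟩
        · exact hOr x y h1 h2
        · exact hcon.2 h1
      · rcases h2 with h2 | ⟨h3, h4⟩
        · exact hcon.2 h2
        · exact hne h4
  exact hcon.1 hOab

/-- An oriented subrelation covering a symmetric relation is an orientation. -/
lemma orientation_of_covers {E O : V → V → Prop}
    (hsub : ∀ a b, O a b → E a b) (hor : Oriented O)
    (hcov : ∀ a b, E a b → O a b ∨ O b a) : IsOrientation O E := by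
  refine ⟨hsub, hor, ?_⟩
  intro O' hsub' hor' hext a b hab
  rcases hcov a b (hsub' a b hab) with h | h
  · exact h
  · exact absurd (hext b a h) (hor' a b hab)

/-- The transitive closure of an oriented transitive digraph is itself. -/
lemma transGen_self {R : V → V → Prop} (hor : Oriented R) (htr : TransD R) :
    ∀ a b, Relation.TransGen R a b → R a b := by
  intro a b h
  induction h with
  | single h => exact h
  | tail _ hbc ih =>
      rename_i b' c' _
      by_cases hac : a = c'
      · subst hac
        exact absurd ih (hor _ _ hbc)
      · exact htr _ _ _ ih hbc hac

/-- Key path lemma: if `Q` is a subrelation-orientation of `G` with the covering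
property, `H` orients the complement of `G`, and `b` is `tcl H`-incomparable with
both `a` and `c`, while `Q a b` and `Q b c`, then there is no `H`-path from `a`
to `c`. -/
lemma key_no_path {G Q H : V → V → Prop}
    (hund : ∀ a b, G a b → G b a)
    (hQsub : ∀ a b, Q a b → G a b) (hQtr : TransD Q)
    (hQcov : ∀ a b, G a b → Q a b ∨ Q b a)
    (hHsub : ∀ a b, H a b → cmpl G a b)
    (hHcov : ∀ a b, cmpl G a b → H a b ∨ H b a)
    {a b c : V} (hab : Q a b) (hbc : Q b c)
    (hnab : ¬ Relation.TransGen H a b) (hnbc : ¬ Relation.TransGen H b c)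
    (hncb : ¬ Relation.TransGen H c b) :
    ¬ Relation.TransGen H a c := by
  intro hac
  have key : ∀ (x : V), Relation.TransGen H x c →
      Q x b → (x = a ∨ Relation.TransGen H a x) → False := by
    intro x h
    induction h using Relation.TransGen.head_induction_on with
    | single hxc =>
        intro hxb _
        have hcg := hHsub _ _ hxc
        exact hcg.2 (Or.inl (hQsub _ _ (hQtr _ _ _ hxb hbc hcg.1)))
    | head hxy hyc IH =>
        rename_i x' y'
        intro hxb hax
        have hPay : Relation.TransGen H a y' := by
          rcases hax with rfl | h
          · exact Relation.TransGen.single hxy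
          · exact h.tail hxy
        by_cases hyb : y' = b
        · subst hyb
          exact hnbc hyc
        · have hcgxy := hHsub _ _ hxy
          by_cases hGyb : G y' b
          · rcases hQcov _ _ hGyb with h | h
            · exact IH h (Or.inr hPay)
            · exact hcgxy.2 (Or.inl (hQsub _ _ (hQtr _ _ _ hxb h hcgxy.1)))
          · have hcyb : cmpl G y' b := by
              refine ⟨hyb, ?_⟩
              rintro (h | h)
              · exact hGyb h
              · exact hGyb (hund _ _ h)
            rcases hHcov _ _ hcyb with h | h
            · exact hnab (hPay.tail h)
            · exact hnbc (hyc.head h)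
  exact key a hac hab (Or.inl rfl)

end AuxLemmas

theorem maximal_permutation_subgraph_is_induced
    {V : Type*} [Fintype V] (G S : V → V → Prop)
    (hirr : Irreflexive G) (hund : ∀ a b, G a b → G b a)
    (hto : TransOrientable G)
    (hS : PermSubgraph G S)
    (hmax : ∀ T : V → V → Prop, PermSubgraph G T →
      (∀ a b, S a b → T a b) → ∀ a b, T a b → S a b) :
    ∃ H : V → V → Prop, IsOrientation H (cmpl G) ∧
      ∀ a b, S a b ↔ G a b ∧ ¬ ucl (tcl H) a b := by

  classical
  obtain ⟨Q, hQo, hQtr⟩ := hto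
  have hQsub : ∀ a b, Q a b → G a b := hQo.1
  have hQor : Oriented Q := hQo.2.1
  have hQcov : ∀ a b, G a b → Q a b ∨ Q b a :=
    orientation_covers (fun a => hirr a) hQo
  obtain ⟨hSsub, hSirr, hSsym, -, F', ⟨hF'sub, hF'or, hF'max⟩, hF'tr⟩ := hS
  have hGCsub : ∀ a b, cmpl G a b → cmpl S a b := by
    rintro a b ⟨hne, hn⟩
    refine ⟨hne, ?_⟩
    rintro (h | h)
    · exact hn (Or.inl (hSsub _ _ h))
    · exact hn (Or.inr (hSsub _ _ h))
  have hF'cov : ∀ a b, cmpl S a b → F' a b ∨ F' b a :=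
    orientation_covers (fun a h => h.1 rfl) ⟨hF'sub, hF'or, hF'max⟩
  set H : V → V → Prop := fun a b => cmpl G a b ∧ F' a b with hHdef
  have hHsub : ∀ a b, H a b → cmpl G a b := fun a b h => h.1
  have hHcov : ∀ a b, cmpl G a b → H a b ∨ H b a := by
    intro a b h
    rcases hF'cov a b (hGCsub a b h) with h' | h'
    · exact Or.inl ⟨h, h'⟩
    · exact Or.inr ⟨⟨Ne.symm h.1, fun hu => h.2 (Or.symm hu)⟩, h'⟩
  have hHor : Oriented H := fun a b h h' => hF'or a b h.2 h'.2
  have hHorient : IsOrientation H (cmpl G) :=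
    orientation_of_covers hHsub hHor hHcov
  have hPF' : ∀ a b, Relation.TransGen H a b → F' a b := by
    intro a b h
    exact transGen_self hF'or hF'tr a b
      (Relation.TransGen.mono (r := H) (p := F') (fun x y hh => hh.2) a b h)
  have hSnotP : ∀ a b, S a b → ¬ ucl (tcl H) a b := by
    intro a b hs hu
    rcases hu with h | h
    · exact (hF'sub _ _ (hPF' _ _ h)).2 (Or.inl hs)
    · exact (hF'sub _ _ (hPF' _ _ h)).2 (Or.inr hs)
  set T : V → V → Prop := fun a b => G a b ∧ ¬ ucl (tcl H) a b with hTdef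
  have hTsym : ∀ a b, T a b → T b a := by
    rintro a b ⟨hg, hn⟩
    exact ⟨hund _ _ hg, fun hu => hn (Or.symm hu)⟩
  have hDtr : TransD (fun a b => Q a b ∧ T a b) := by
    rintro a b c ⟨hqab, hTab⟩ ⟨hqbc, hTbc⟩ hac
    have hnab : ¬ Relation.TransGen H a b := fun h => hTab.2 (Or.inl h)
    have hnba : ¬ Relation.TransGen H b a := fun h => hTab.2 (Or.inr h)
    have hnbc : ¬ Relation.TransGen H b c := fun h => hTbc.2 (Or.inl h)
    have hncb : ¬ Relation.TransGen H c b := fun h => hTbc.2 (Or.inr h)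
    have hqac : Q a c := hQtr _ _ _ hqab hqbc hac
    have h1 : ¬ Relation.TransGen H a c :=
      key_no_path hund hQsub hQtr hQcov hHsub hHcov hqab hqbc hnab hnbc hncb
    have h2 : ¬ Relation.TransGen H c a :=
      key_no_path (Q := Function.swap Q) hund
        (fun a b h => hund _ _ (hQsub _ _ h))
        (fun a b c hab hbc hac => hQtr _ _ _ hbc hab (Ne.symm hac))
        (fun a b h => Or.symm (hQcov a b h))
        hHsub hHcov hqbc hqab hncb hnba hnab
    exact ⟨hqac, hQsub _ _ hqac, fun hu => hu.elim h1 h2⟩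
  have hDcov : ∀ a b, T a b → (Q a b ∧ T a b) ∨ (Q b a ∧ T b a) := by
    intro a b ht
    rcases hQcov a b ht.1 with h | h
    · exact Or.inl ⟨h, ht⟩
    · exact Or.inr ⟨h, hTsym _ _ ht⟩
  have hDorient : IsOrientation (fun a b => Q a b ∧ T a b) T :=
    orientation_of_covers (fun a b h => h.2)
      (fun a b h h' => hQor a b h.1 h'.1) hDcov
  have hPor : Oriented (Relation.TransGen H) :=
    fun a b h h' => hF'or a b (hPF' _ _ h) (hPF' _ _ h')
  have hPsub : ∀ a b, Relation.TransGen H a b → cmpl T a b := by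
    intro a b h
    have hne : a ≠ b := by
      intro he
      subst he
      exact hF'or a a (hPF' _ _ h) (hPF' _ _ h)
    refine ⟨hne, ?_⟩
    rintro (ht | ht)
    · exact ht.2 (Or.inl h)
    · exact ht.2 (Or.inr h)
  have hPcov : ∀ a b, cmpl T a b →
      Relation.TransGen H a b ∨ Relation.TransGen H b a := by
    rintro a b ⟨hne, hnt⟩
    by_cases hg : G a b
    · by_contra hcon
      push_neg at hcon
      exact hnt (Or.inl ⟨hg, fun hu => hu.elim hcon.1 hcon.2⟩)
    · have hc : cmpl G a b :=
        ⟨hne, fun hu => hu.elim hg (fun h => hg (hund _ _ h))⟩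
      rcases hHcov a b hc with h | h
      · exact Or.inl (Relation.TransGen.single h)
      · exact Or.inr (Relation.TransGen.single h)
  have hPorient : IsOrientation (Relation.TransGen H) (cmpl T) :=
    orientation_of_covers hPsub hPor hPcov
  have hTperm : PermSubgraph G T := by
    refine ⟨fun a b h => h.1, fun a h => hirr a h.1, hTsym, ?_, ?_⟩
    · exact ⟨fun a b => Q a b ∧ T a b, hDorient, hDtr⟩
    · exact ⟨Relation.TransGen H, hPorient, fun a b c h h' _ => h.trans h'⟩
  have hST : ∀ a b, S a b → T a b := fun a b h => ⟨hSsub _ _ h, hSnotP _ _ h⟩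
  exact ⟨H, hHorient, fun a b =>
    ⟨fun h => hST a b h, fun h => hmax T hTperm hST a b h⟩⟩
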